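/- Fix an integer q ≥ 2. For integers x, y, we have y = q^x (with x ∈ ℕ) if and only if y ∈ q^ℕ, 0 ≤ x < y, and x + y ∈ A_q, where A_q = {q^n + n : n ∈ ℕ}. -/

import Mathlib

lemma nat_lt_pow (q : ℤ) (hq : 2 ≤ q) (n : ℕ) : (n : ℤ) < q ^ n := by
  calc (n : ℤ) < 2 ^ n := by exact_mod_cast (Nat.lt_two_pow_self (n := n))
    _ ≤ q ^ n := pow_le_pow_left₀ (by norm_num) hq n

lemma two_pow_le (q : ℤ) (hq : 2 ≤ q) {k n : ℕ} (h : k < n) :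
    2 * q ^ k ≤ q ^ n := by
  have h1 : q ^ (k + 1) ≤ q ^ n := pow_le_pow_right₀ (by linarith) h
  have h2 : 2 * q ^ k ≤ q ^ (k + 1) := by
    rw [pow_succ]
    have hk : (0:ℤ) < q ^ k := pow_pos (by linarith) k
    nlinarith
  linarith

/-- For `q ≥ 2` and integers `x, y`: `y = q^x` (with `x ∈ ℕ`) iff `y ∈ q^ℕ`,
`0 ≤ x < y`, and `x + y ∈ A_q = {q^n + n : n ∈ ℕ}`. -/
theorem stmt3 (q : ℤ) (hq : 2 ≤ q) (x y : ℤ) :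
    (∃ n : ℕ, x = (n : ℤ) ∧ y = q ^ n) ↔
      ((∃ k : ℕ, y = q ^ k) ∧ 0 ≤ x ∧ x < y ∧ ∃ n : ℕ, x + y = q ^ n + n) := by
  constructor
  · rintro ⟨n, rfl, rfl⟩
    exact ⟨⟨n, rfl⟩, Int.natCast_nonneg n, nat_lt_pow q hq n, ⟨n, by ring⟩⟩
  · rintro ⟨⟨k, rfl⟩, hx0, hxy, n, hn⟩
    refine ⟨n, ?_, ?_⟩
    · rcases lt_trichotomy k n with h | h | h
      · exfalso
        have := two_pow_le q hq h
        have hn0 : (0:ℤ) ≤ n := Int.natCast_nonneg n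
        linarith
      · subst h; linarith
      · exfalso
        have := two_pow_le q hq h
        have := nat_lt_pow q hq n
        linarith
    · rcases lt_trichotomy k n with h | h | h
      · exfalso
        have := two_pow_le q hq h
        have hn0 : (0:ℤ) ≤ n := Int.natCast_nonneg n
        linarith
      · subst h; rfl
      · exfalso
        have := two_pow_le q hq h
        have := nat_lt_pow q hq n
        linarith
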